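/- Write a nonzero Laurent polynomial f ∈ ℤ[q, q^{−1}] as f = m·g·h where m ∈ ℤ_{>0}, g ∈ ℤ[q] is a primitive polynomial with g(0) > 0 having no cyclotomic irreducible factor, and h is a unit of à = ℤ[q, q^{−1}, (q^n−1)^{−1} : n>0]. If for every field K and every non-root-of-unity z ∈ K^× the specialization of f at q = z is nonzero, then m = 1 and g = 1. -/

import Mathlib

noncomputable section

/-- Evaluation of a Laurent polynomial over `ℤ` at a unit `z` of a field `K`. -/
def lEval {K : Type*} [Field K] (z : Kˣ) (f : LaurentPolynomial ℤ) : K :=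
  f.coeff.sum fun n a => (a : K) * ((z ^ n : Kˣ) : K)

/-- The canonical image of a Laurent polynomial over `ℤ` in `ℚ(q)` (with `q = X`). -/
def lRF (f : LaurentPolynomial ℤ) : RatFunc ℚ :=
  f.coeff.sum fun n a => (a : RatFunc ℚ) * (RatFunc.X : RatFunc ℚ) ^ n

/-- The subring `Ã = ℤ[q, q⁻¹, (qⁿ−1)⁻¹ : n > 0]` of `ℚ(q)`. -/
def Atilde : Subring (RatFunc ℚ) :=
  Subring.closure
    ({RatFunc.X, (RatFunc.X)⁻¹} ∪
      {x : RatFunc ℚ | ∃ n : ℕ, 0 < n ∧ x = ((RatFunc.X : RatFunc ℚ) ^ n - 1)⁻¹})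

namespace Stmt2Aux

open Polynomial LaurentPolynomial

/-- Evaluation of Laurent polynomials as an algebra hom. -/
def E {K : Type*} [Field K] (z : Kˣ) : LaurentPolynomial ℤ →ₐ[ℤ] K :=
  AddMonoidAlgebra.lift ℤ K ℤ ((Units.coeHom K).comp (zpowersHom Kˣ z))

lemma E_apply {K : Type*} [Field K] (z : Kˣ) (f : LaurentPolynomial ℤ) :
    E z f = lEval z f := by
  rw [E, AddMonoidAlgebra.lift_apply, lEval]
  refine Finsupp.sum_congr fun n _ => ?_
  simp [zsmul_eq_mul]

lemma E_T {K : Type*} [Field K] (z : Kˣ) (n : ℤ) :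
    E z (LaurentPolynomial.T n) = ((z ^ n : Kˣ) : K) := by
  rw [E, LaurentPolynomial.T, AddMonoidAlgebra.lift_single]
  simp

lemma E_toLaurent {K : Type*} [Field K] (z : Kˣ) (p : Polynomial ℤ) :
    E z (p.toLaurent) = Polynomial.eval₂ (Int.castRingHom K) (z : K) p := by
  have : ((E z).toRingHom.comp (Polynomial.toLaurent (R := ℤ)))
      = Polynomial.eval₂RingHom (Int.castRingHom K) (z : K) := by
    apply Polynomial.ringHom_ext
    · intro a
      exact RingHom.congr_fun (Subsingleton.elim
        (((E z).toRingHom.comp (Polynomial.toLaurent (R := ℤ))).comp Polynomial.C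
          : ℤ →+* K)
        ((Polynomial.eval₂RingHom (Int.castRingHom K) (z : K)).comp Polynomial.C)) a
    · simp only [RingHom.coe_comp, Function.comp_apply, Polynomial.toLaurent_X,
        Polynomial.coe_eval₂RingHom, Polynomial.eval₂_X, AlgHom.toRingHom_eq_coe,
        RingHom.coe_coe]
      rw [E_T]
      simp
  have := RingHom.congr_fun this p
  simpa using this

/-- `X` as a unit of `ℚ(q)`. -/
def Xu : (RatFunc ℚ)ˣ := Units.mk0 RatFunc.X RatFunc.X_ne_zero

lemma lRF_eq (f : LaurentPolynomial ℤ) : lRF f = lEval Xu f := by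
  refine Finsupp.sum_congr fun n _ => ?_
  rw [Units.val_zpow_eq_zpow_val]
  rfl

/-- The multiplicative set generated by `X` and the `Xⁿ - 1`. -/
def S : Submonoid (Polynomial ℤ) :=
  Submonoid.closure ({Polynomial.X} ∪
    {p : Polynomial ℤ | ∃ n : ℕ, 0 < n ∧ p = Polynomial.X ^ n - 1})

lemma S_eval_ne_zero {K : Type*} [Field K] (z : Kˣ)
    (hz : ∀ n : ℕ, 0 < n → z ^ n ≠ 1) {s : Polynomial ℤ} (hs : s ∈ S) :
    Polynomial.eval₂ (Int.castRingHom K) (z : K) s ≠ 0 := by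
  induction hs using Submonoid.closure_induction with
  | mem x hx =>
    rcases hx with hx | ⟨n, hn, rfl⟩
    · rw [Set.mem_singleton_iff] at hx
      subst hx
      simpa using z.ne_zero
    · simp only [Polynomial.eval₂_sub, Polynomial.eval₂_pow, Polynomial.eval₂_X,
        Polynomial.eval₂_one]
      refine sub_ne_zero.mpr fun hcon => hz n hn (Units.ext ?_)
      simpa using hcon
  | one => simp
  | mul x y hx hy ihx ihy => simpa using mul_ne_zero ihx ihy

/-- The canonical map `ℤ[X] → ℚ(q)`. -/
def ιR : Polynomial ℤ →+* RatFunc ℚ :=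
  Polynomial.eval₂RingHom (Int.castRingHom (RatFunc ℚ)) RatFunc.X

lemma ιR_eq : ιR = (algebraMap (Polynomial ℚ) (RatFunc ℚ)).comp
    (Polynomial.mapRingHom (Int.castRingHom ℚ)) := by
  apply Polynomial.ringHom_ext
  · intro a
    exact RingHom.congr_fun (Subsingleton.elim (ιR.comp Polynomial.C)
      (((algebraMap (Polynomial ℚ) (RatFunc ℚ)).comp
        (Polynomial.mapRingHom (Int.castRingHom ℚ))).comp Polynomial.C)) a
  · simp [ιR]

lemma ιR_injective : Function.Injective ιR := by
  rw [ιR_eq]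
  exact (RatFunc.algebraMap_injective ℚ).comp
    (Polynomial.map_injective _ Int.cast_injective)

lemma ιR_X : ιR Polynomial.X = RatFunc.X := by simp [ιR]

lemma mem_atilde {x : RatFunc ℚ} (hx : x ∈ Atilde) :
    ∃ a : Polynomial ℤ, ∃ s ∈ S, x * ιR s = ιR a := by
  induction hx using Subring.closure_induction with
  | mem y hy =>
    rcases hy with (hy | hy) | ⟨n, hn, rfl⟩
    · subst hy
      exact ⟨Polynomial.X, 1, one_mem _, by rw [map_one, mul_one, ιR_X]⟩
    · rw [Set.mem_singleton_iff] at hy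
      subst hy
      refine ⟨1, Polynomial.X, Submonoid.subset_closure (Or.inl rfl), ?_⟩
      rw [ιR_X, inv_mul_cancel₀ RatFunc.X_ne_zero, map_one]
    · refine ⟨1, Polynomial.X ^ n - 1,
        Submonoid.subset_closure (Or.inr ⟨n, hn, rfl⟩), ?_⟩
      have h1 : ιR (Polynomial.X ^ n - 1) = RatFunc.X ^ n - 1 := by simp [ιR]
      have h2 : (RatFunc.X : RatFunc ℚ) ^ n - 1 ≠ 0 := by
        rw [← h1]
        intro hcon
        have : (Polynomial.X ^ n - 1 : Polynomial ℤ) = 0 := by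
          apply ιR_injective; simpa using hcon
        have := congrArg (Polynomial.eval 0) this
        simp [zero_pow hn.ne'] at this
      rw [h1, inv_mul_cancel₀ h2, map_one]
  | zero => exact ⟨0, 1, one_mem _, by simp⟩
  | one => exact ⟨1, 1, one_mem _, by simp⟩
  | add x y hx hy ihx ihy =>
    obtain ⟨a, s, hs, ha⟩ := ihx
    obtain ⟨b, t, ht, hb⟩ := ihy
    refine ⟨a * t + b * s, s * t, mul_mem hs ht, ?_⟩
    rw [map_mul, map_add, map_mul, map_mul, ← ha, ← hb]
    ring
  | neg x hx ihx =>
    obtain ⟨a, s, hs, ha⟩ := ihx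
    exact ⟨-a, s, hs, by rw [map_neg, ← ha]; ring⟩
  | mul x y hx hy ihx ihy =>
    obtain ⟨a, s, hs, ha⟩ := ihx
    obtain ⟨b, t, ht, hb⟩ := ihy
    refine ⟨a * b, s * t, mul_mem hs ht, ?_⟩
    rw [map_mul, map_mul, ← ha, ← hb]
    ring

lemma key {K : Type*} [Field K] (f : LaurentPolynomial ℤ) (m : ℕ)
    (g : Polynomial ℤ) (h : RatFunc ℚ) (hh : h ∈ Atilde)
    (heq : lRF f = (m : RatFunc ℚ) * Polynomial.aeval (RatFunc.X : RatFunc ℚ) g * h)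
    (z : Kˣ) (hz : ∀ n : ℕ, 0 < n → z ^ n ≠ 1)
    (h0 : (m : K) * Polynomial.eval₂ (Int.castRingHom K) (z : K) g = 0) :
    lEval z f = 0 := by
  obtain ⟨N, P, hP⟩ := f.exists_T_pow
  obtain ⟨a, s, hs, hsa⟩ := mem_atilde hh
  have hιg : ιR g = Polynomial.aeval (RatFunc.X : RatFunc ℚ) g := by
    rw [Polynomial.aeval_def, ιR, Polynomial.coe_eval₂RingHom]
    congr 1
    exact Subsingleton.elim _ _
  have h1 : ιR P = lRF f * (RatFunc.X : RatFunc ℚ) ^ N := by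
    have h' := E_toLaurent Xu P
    rw [hP, map_mul, E_apply, E_T, ← lRF_eq, Units.val_zpow_eq_zpow_val,
      zpow_natCast] at h'
    exact h'.symm
  have hCm : ιR (Polynomial.C (m : ℤ)) = (m : RatFunc ℚ) := by
    simp [ιR]
  have h2 : ιR (P * s) = ιR (Polynomial.C (m : ℤ) * g * a * Polynomial.X ^ N) := by
    rw [map_mul, map_mul, map_mul, map_mul, map_pow, ιR_X, hCm, hιg, h1, heq]
    calc (m : RatFunc ℚ) * Polynomial.aeval (RatFunc.X : RatFunc ℚ) g * h
          * RatFunc.X ^ N * ιR s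
        = (m : RatFunc ℚ) * Polynomial.aeval (RatFunc.X : RatFunc ℚ) g
          * (h * ιR s) * RatFunc.X ^ N := by ring
      _ = _ := by rw [hsa]
  have h3 : P * s = Polynomial.C (m : ℤ) * g * a * Polynomial.X ^ N :=
    ιR_injective h2
  have h4 := congrArg (Polynomial.eval₂RingHom (Int.castRingHom K) (z : K)) h3
  simp only [map_mul, map_pow, Polynomial.coe_eval₂RingHom, Polynomial.eval₂_C,
    Polynomial.eval₂_X] at h4
  simp only [eq_intCast, Int.cast_natCast] at h4
  have h5 : Polynomial.eval₂ (Int.castRingHom K) (z : K) P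
      * Polynomial.eval₂ (Int.castRingHom K) (z : K) s = 0 := by
    rw [h4, show (m : K) * Polynomial.eval₂ (Int.castRingHom K) (z : K) g
      * Polynomial.eval₂ (Int.castRingHom K) (z : K) a * (z : K) ^ N
      = ((m : K) * Polynomial.eval₂ (Int.castRingHom K) (z : K) g)
        * (Polynomial.eval₂ (Int.castRingHom K) (z : K) a * (z : K) ^ N) by ring,
      h0, zero_mul]
  have h6 : Polynomial.eval₂ (Int.castRingHom K) (z : K) P = 0 :=
    (mul_eq_zero.mp h5).resolve_right (S_eval_ne_zero z hz hs)
  have h7 := E_toLaurent z P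
  rw [hP, map_mul, E_apply, E_T, h6] at h7
  exact (mul_eq_zero.mp h7).resolve_right (Units.ne_zero _)

end Stmt2Aux

/-- write a nonzero `f ∈ ℤ[q,q⁻¹]` as `f = m·g·h` with `m ∈ ℤ_{>0}`,
`g ∈ ℤ[q]` primitive with `g(0) > 0` and with no cyclotomic irreducible factor, and
`h` a unit of `Ã`.  If every specialization of `f` at a non-root-of-unity `z ∈ Kˣ`
is nonzero, then `m = 1` and `g = 1`. -/
theorem stmt_2 (f : LaurentPolynomial ℤ) (hf : f ≠ 0)
    (m : ℕ) (hm : 0 < m)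
    (g : Polynomial ℤ) (hprim : g.IsPrimitive) (hg0 : 0 < g.eval 0)
    (hnocyc : ∀ n : ℕ, 0 < n → ¬ (Polynomial.cyclotomic n ℤ ∣ g))
    (h : RatFunc ℚ) (hh : h ∈ Atilde) (hh' : h⁻¹ ∈ Atilde)
    (heq : lRF f = (m : RatFunc ℚ) * Polynomial.aeval (RatFunc.X : RatFunc ℚ) g * h)
    (hspec : ∀ (K : Type) (_ : Field K) (z : Kˣ),
      (∀ n : ℕ, 0 < n → z ^ n ≠ 1) → lEval z f ≠ 0) :
    m = 1 ∧ g = 1 := by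
  constructor
  · -- m = 1
    by_contra hm1
    set p := m.minFac with hpdef
    have hp : p.Prime := Nat.minFac_prime hm1
    haveI : Fact p.Prime := ⟨hp⟩
    set K := RatFunc (ZMod p) with hK
    set z : Kˣ := Units.mk0 RatFunc.X RatFunc.X_ne_zero with hzdef
    have hz : ∀ n : ℕ, 0 < n → z ^ n ≠ 1 := by
      intro n hn hcon
      have h1 : (RatFunc.X : K) ^ n = 1 := by
        have := congrArg Units.val hcon
        simpa [hzdef] using this
      have h2 : (Polynomial.X : Polynomial (ZMod p)) ^ n = 1 := by
        apply RatFunc.algebraMap_injective (ZMod p)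
        rw [map_pow, map_one, RatFunc.algebraMap_X]
        exact h1
      have := congrArg Polynomial.natDegree h2
      simp [Polynomial.natDegree_X_pow, hn.ne'] at this
    have hmK : (m : K) = 0 := by
      rw [← map_natCast (algebraMap (ZMod p) K) m,
        (ZMod.natCast_eq_zero_iff m p).mpr (Nat.minFac_dvd m), map_zero]
    exact hspec K inferInstance z hz
      (Stmt2Aux.key f m g h hh heq z hz (by rw [hmK, zero_mul]))
  · -- g = 1
    have hdeg : g.natDegree = 0 := by
      by_contra hdeg
      have hdegC : (g.map (Int.castRingHom ℂ)).natDegree ≠ 0 := by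
        rwa [Polynomial.natDegree_map_eq_of_injective Int.cast_injective]
      obtain ⟨z0, hz0⟩ := Complex.exists_root
        (Polynomial.natDegree_pos_iff_degree_pos.mp
          (Nat.pos_of_ne_zero hdegC))
      have hev : Polynomial.eval₂ (Int.castRingHom ℂ) z0 g = 0 := by
        rw [← Polynomial.eval_map]; exact hz0
      have hz0ne : z0 ≠ 0 := by
        intro h0
        subst h0
        rw [Polynomial.eval₂_at_zero, Polynomial.coeff_zero_eq_eval_zero] at hev
        exact (Int.cast_ne_zero.mpr hg0.ne') hev
      set zu : ℂˣ := Units.mk0 z0 hz0ne with hzudef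
      have hz : ∀ n : ℕ, 0 < n → zu ^ n ≠ 1 := by
        intro n hn hcon
        have hzn : z0 ^ n = 1 := by
          have := congrArg Units.val hcon
          simpa [hzudef] using this
        have hfin : IsOfFinOrder z0 := isOfFinOrder_iff_pow_eq_one.mpr ⟨n, hn, hzn⟩
        have hdpos : 0 < orderOf z0 := hfin.orderOf_pos
        have hprimroot : IsPrimitiveRoot z0 (orderOf z0) := IsPrimitiveRoot.orderOf z0
        have hcyc : Polynomial.cyclotomic (orderOf z0) ℚ = minpoly ℚ z0 :=
          Polynomial.cyclotomic_eq_minpoly_rat hprimroot hdpos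
        have hdvd : minpoly ℚ z0 ∣ g.map (Int.castRingHom ℚ) := by
          refine minpoly.dvd ℚ z0 ?_
          rw [Polynomial.aeval_def, Polynomial.eval₂_map,
            show (algebraMap ℚ ℂ).comp (Int.castRingHom ℚ) = Int.castRingHom ℂ from
              Subsingleton.elim _ _]
          exact hev
        refine hnocyc (orderOf z0) hdpos ?_
        rw [Polynomial.IsPrimitive.Int.dvd_iff_map_cast_dvd_map_cast _ _
          ((Polynomial.cyclotomic.monic _ ℤ).isPrimitive),
          Polynomial.map_cyclotomic, hcyc]
        exact hdvd
      exact hspec ℂ inferInstance zu hz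
        (Stmt2Aux.key f m g h hh heq zu hz (by
          rw [show Polynomial.eval₂ (Int.castRingHom ℂ) ((zu : ℂ)) g = 0 from hev,
            mul_zero]))
    obtain ⟨c, hc⟩ := Polynomial.natDegree_eq_zero.mp hdeg
    have hcunit : IsUnit c := hprim c (hc ▸ dvd_refl _)
    have hceval : g.eval 0 = c := by rw [← hc, Polynomial.eval_C]
    rcases Int.isUnit_iff.mp hcunit with h1 | h1
    · rw [← hc, h1, map_one]
    · rw [hceval, h1] at hg0
      omega
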